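/- Let t0 > 0, u0 > 0, and suppose F : [t0,∞) × ℝ → [0,∞) and q_+ : [t0,∞) → [0,1] are continuous with q_+(t) → 0 as t → ∞. Suppose u : [t0,∞) → (0,∞) is a C² solution of u'' + F(t, u) = 0 with u(t0) = u0 and 0 ≤ u'(t)/u(t) ≤ q_+(t)/t for all t ≥ t0. Then: (i) u is nondecreasing; (ii) u(t) = o(t) as t → ∞; (iii) u(t)/t ≤ u0/t0 for all t ≥ t0. -/

import Mathlib

open Real Filter

theorem stmt18 (t0 u0 : ℝ) (ht0 : 0 < t0) (hu0 : 0 < u0)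
    (F : ℝ → ℝ → ℝ) (qp : ℝ → ℝ) (u : ℝ → ℝ)
    (hF_cont : Continuous (fun p : ℝ × ℝ => F p.1 p.2))
    (hF_nonneg : ∀ t ≥ t0, ∀ x : ℝ, 0 ≤ F t x)
    (hqp_cont : ContinuousOn qp (Set.Ici t0))
    (hqp_mem : ∀ t ≥ t0, qp t ∈ Set.Icc (0:ℝ) 1)
    (hqp_lim : Tendsto qp atTop (nhds 0))
    (hu : ContDiff ℝ 2 u) (hu_pos : ∀ t ≥ t0, 0 < u t)
    (hu_init : u t0 = u0)
    (hODE : ∀ t ≥ t0, deriv (deriv u) t + F t (u t) = 0)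
    (hlog : ∀ t ≥ t0, 0 ≤ deriv u t / u t ∧ deriv u t / u t ≤ qp t / t) :
    MonotoneOn u (Set.Ici t0) ∧
    (fun t => u t) =o[atTop] (fun t => t) ∧
    (∀ t ≥ t0, u t / t ≤ u0 / t0) := by
  have hu_cont : Continuous u := hu.continuous
  have hu_diff : Differentiable ℝ u := hu.differentiable (by norm_num)
  have hd0 : ∀ t ≥ t0, 0 ≤ deriv u t := by
    intro t ht
    have h1 := (hlog t ht).1
    have hpos := hu_pos t ht
    have := mul_nonneg h1 hpos.le
    rwa [div_mul_cancel₀ _ hpos.ne'] at this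
  have hkey : ∀ t ≥ t0, deriv u t ≤ qp t / t * u t := by
    intro t ht
    exact (div_le_iff₀ (hu_pos t ht)).mp (hlog t ht).2
  have hmono : MonotoneOn u (Set.Ici t0) := by
    apply monotoneOn_of_deriv_nonneg (convex_Ici t0) hu_cont.continuousOn
      hu_diff.differentiableOn
    intro x hx
    rw [interior_Ici] at hx
    exact hd0 x (le_of_lt hx)
  refine ⟨hmono, ?_, ?_⟩
  · -- little-o part
    have h2 : ∀ᶠ t in atTop, qp t < 1/2 :=
      hqp_lim.eventually (gt_mem_nhds (by norm_num : (0:ℝ) < 1/2))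
    obtain ⟨T0, hT0⟩ := eventually_atTop.mp h2
    set T := max T0 t0 with hTdef
    have hTt0 : t0 ≤ T := le_max_right _ _
    have hTpos : 0 < T := lt_of_lt_of_le ht0 hTt0
    set C : ℝ := Real.log (u T) - (1/2) * Real.log T with hC
    have hw : AntitoneOn (fun t => Real.log (u t) - (1/2) * Real.log t) (Set.Ici T) := by
      apply antitoneOn_of_deriv_nonpos (convex_Ici T)
      · apply ContinuousOn.sub
        · exact ContinuousOn.log hu_cont.continuousOn
            (fun x hx => (hu_pos x (hTt0.trans hx)).ne')
        · exact continuousOn_const.mul <| Real.continuousOn_log.mono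
            (fun x hx => (lt_of_lt_of_le hTpos hx).ne')
      · intro x hx
        rw [interior_Ici] at hx
        have hx0 : 0 < x := hTpos.trans hx
        have hux : 0 < u x := hu_pos x (hTt0.trans hx.le)
        exact (((hu_diff x).hasDerivAt.log hux.ne').sub
          ((hasDerivAt_log hx0.ne').const_mul (1/2))).differentiableAt.differentiableWithinAt
      · intro x hx
        rw [interior_Ici] at hx
        have hx0 : 0 < x := hTpos.trans hx
        have hxt0 : t0 ≤ x := hTt0.trans hx.le
        have hux : 0 < u x := hu_pos x hxt0
        have hd : HasDerivAt (fun t => Real.log (u t) - (1/2) * Real.log t)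
            (deriv u x / u x - 1/2 * x⁻¹) x :=
          ((hu_diff x).hasDerivAt.log hux.ne').sub
            ((hasDerivAt_log hx0.ne').const_mul (1/2))
        rw [hd.deriv]
        have hq : qp x < 1/2 := hT0 x ((le_max_left _ _).trans hx.le)
        have h5 : deriv u x / u x ≤ qp x / x := (hlog x hxt0).2
        have h3 : qp x / x ≤ (1/2) / x := by gcongr
        have h4 : (1/2 : ℝ) / x = 1/2 * x⁻¹ := by ring
        linarith
    have hub : ∀ t ≥ T, u t ≤ Real.exp C * t ^ ((1:ℝ)/2) := by
      intro t ht
      have ht0' : t0 ≤ t := hTt0.trans ht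
      have htpos : 0 < t := hTpos.trans_le ht
      have hupos : 0 < u t := hu_pos t ht0'
      have hwle := hw Set.self_mem_Ici ht ht
      have hle : Real.log (u t) ≤ C + (1/2) * Real.log t := by
        simp only at hwle; rw [hC]; linarith
      calc u t = Real.exp (Real.log (u t)) := (Real.exp_log hupos).symm
        _ ≤ Real.exp (C + (1/2) * Real.log t) := Real.exp_le_exp.mpr hle
        _ = Real.exp C * t ^ ((1:ℝ)/2) := by
            rw [Real.exp_add, Real.rpow_def_of_pos htpos, mul_comm (Real.log t)]
    have hbO : (fun t => u t) =O[atTop] fun t : ℝ => t ^ ((1:ℝ)/2) := by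
      apply Asymptotics.IsBigO.of_bound (Real.exp C)
      filter_upwards [eventually_ge_atTop T] with t ht
      rw [Real.norm_eq_abs, Real.norm_eq_abs,
        abs_of_pos (hu_pos t (hTt0.trans ht)),
        abs_of_nonneg (Real.rpow_nonneg (hTpos.le.trans ht) _)]
      exact hub t ht
    have hlo : (fun t : ℝ => t ^ ((1:ℝ)/2)) =o[atTop] fun t : ℝ => t := by
      rw [Asymptotics.isLittleO_iff_tendsto']
      · apply Tendsto.congr' _ (tendsto_rpow_neg_atTop (by norm_num : (0:ℝ) < 1/2))
        filter_upwards [eventually_gt_atTop (0:ℝ)] with t ht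
        rw [show (-(1/2) : ℝ) = 1/2 - 1 by norm_num, Real.rpow_sub ht, Real.rpow_one]
      · filter_upwards [eventually_gt_atTop (0:ℝ)] with t ht h
        exact absurd h ht.ne'
    exact hbO.trans_isLittleO hlo
  · -- u t / t ≤ u0 / t0
    have hanti : AntitoneOn (fun t => u t / t) (Set.Ici t0) := by
      apply antitoneOn_of_deriv_nonpos (convex_Ici t0)
      · exact hu_cont.continuousOn.div continuousOn_id
          (fun x hx => (ht0.trans_le hx).ne')
      · intro x hx
        rw [interior_Ici] at hx
        exact ((hu_diff x).div differentiableAt_fun_id (ht0.trans hx).ne').differentiableWithinAt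
      · intro x hx
        rw [interior_Ici] at hx
        have hx0 : 0 < x := ht0.trans hx
        have hux : 0 < u x := hu_pos x hx.le
        rw [deriv_fun_div (hu_diff x) differentiableAt_fun_id hx0.ne', deriv_id'']
        apply div_nonpos_of_nonpos_of_nonneg _ (sq_nonneg x)
        have h1 : deriv u x ≤ qp x / x * u x := hkey x hx.le
        have hq1 : qp x ≤ 1 := (hqp_mem x hx.le).2
        have h2 : deriv u x * x ≤ qp x / x * u x * x :=
          mul_le_mul_of_nonneg_right h1 hx0.le
        have h3 : qp x / x * u x * x = qp x * u x := by field_simp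
        have h4 : qp x * u x ≤ 1 * u x := mul_le_mul_of_nonneg_right hq1 hux.le
        show deriv u x * x - u x * 1 ≤ 0
        nlinarith
    intro t ht
    have := hanti Set.self_mem_Ici ht ht
    simpa [hu_init] using this
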